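/- Identification of the bounded locus of a conormal component under the induced cotangent ℂ×-action (the free case of the paper's Lemma on the m-bounded locus of the hypertoric skeleton): Let m : Fin n → ℤ be an integer cocharacter and let α : Fin n → Bool be a sign vector. Consider the conormal component L^α = {(x, ξ) ∈ ℂⁿ × ℂⁿ | x i = 0 for every i with α i = false, and ξ i = 0 for every i with α i = true}, with a nonzero complex number λ acting by λ · (x, ξ) = ((λ^{m i} · x i)_i, (λ^{−(m i)} · ξ i)_i). Then the following are equivalent: (a) every point (x, ξ) ∈ L^α is m-bounded, i.e. the limit of λ · (x, ξ) exists as ‖λ‖ → ∞; (b) m i ≤ 0 for every i with α i = true and m i ≥ 0 for every i with α i = false; (c) the linear functional y ↦ Σᵢ (m i) · (y i) on ℝⁿ is bounded above on the closed orthant O_α. -/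

import Mathlib

open Filter

/-- The filter on nonzero complex numbers (units of `ℂ`) of going to infinity,
obtained by pulling back the `atTop` filter under the norm. -/
noncomputable def unitsAtInfty : Filter ℂˣ :=
  Filter.comap (fun z : ℂˣ => ‖(z : ℂ)‖) Filter.atTop

/-- The closed orthant associated to a sign vector `α : Fin n → Bool`. -/
def orthant {n : ℕ} (α : Fin n → Bool) : Set (EuclideanSpace ℝ (Fin n)) :=
  {y | ∀ i, (α i = true → 0 ≤ y i) ∧ (α i = false → y i ≤ 0)}

/-- The conormal component `L^α ⊆ T*ℂⁿ = ℂⁿ × ℂⁿ` to the coordinate subspace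
`X^α = {x | x i = 0 for i with α i = false}`. -/
def conormalComponent {n : ℕ} (α : Fin n → Bool) :
    Set ((Fin n → ℂ) × (Fin n → ℂ)) :=
  {p | (∀ i, α i = false → p.1 i = 0) ∧ (∀ i, α i = true → p.2 i = 0)}

/-- The `ℂˣ`-action on `T*ℂⁿ` induced by the cocharacter `m`, acting with weight `m i`
on the base coordinate `x i` and weight `-(m i)` on the fiber coordinate `ξ i`. -/
noncomputable def cotangentAction {n : ℕ} (m : Fin n → ℤ) (z : ℂˣ)
    (p : (Fin n → ℂ) × (Fin n → ℂ)) : (Fin n → ℂ) × (Fin n → ℂ) :=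
  (fun i => (z : ℂ) ^ (m i) * p.1 i, fun i => (z : ℂ) ^ (-(m i)) * p.2 i)

/-- A point `p` of `T*ℂⁿ` is `m`-bounded if `z • p` converges as `‖z‖ → ∞`. -/
def IsMBounded {n : ℕ} (m : Fin n → ℤ) (p : (Fin n → ℂ) × (Fin n → ℂ)) : Prop :=
  ∃ L : (Fin n → ℂ) × (Fin n → ℂ),
    Tendsto (fun z : ℂˣ => cotangentAction m z p) unitsAtInfty (nhds L)

lemma tendsto_norm_unitsAtInfty :
    Tendsto (fun z : ℂˣ => ‖(z : ℂ)‖) unitsAtInfty atTop := tendsto_comap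

lemma unitsAtInfty_neBot : (unitsAtInfty).NeBot := by
  have h : Tendsto (fun r : ℝ => Units.mk0 ((max r 1 : ℝ) : ℂ)
      (by exact_mod_cast (lt_of_lt_of_le one_pos (le_max_right r 1)).ne')) atTop unitsAtInfty := by
    rw [unitsAtInfty, tendsto_comap_iff]
    have : ∀ r : ℝ, ‖((max r 1 : ℝ) : ℂ)‖ = max r 1 := by
      intro r
      rw [Complex.norm_real, Real.norm_of_nonneg (le_trans zero_le_one (le_max_right r 1))]
    simp only [Function.comp_def, Units.val_mk0, this]
    exact tendsto_atTop_mono (fun r => le_max_left r 1) tendsto_id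
  exact neBot_of_le (f := map _ atTop) h

lemma tendsto_zpow_unitsAtInfty {k : ℤ} (hk : k < 0) :
    Tendsto (fun z : ℂˣ => (z : ℂ) ^ k) unitsAtInfty (nhds 0) := by
  rw [tendsto_zero_iff_norm_tendsto_zero]
  have : (fun z : ℂˣ => ‖(z : ℂ) ^ k‖) = (fun r : ℝ => r ^ k) ∘ fun z : ℂˣ => ‖(z : ℂ)‖ := by
    funext z; simp [norm_zpow]
  rw [this]
  exact (tendsto_zpow_atTop_zero hk).comp tendsto_norm_unitsAtInfty

lemma not_tendsto_zpow {k : ℤ} (hk : 0 < k) {c : ℂ} (hc : c ≠ 0) (L : ℂ) :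
    ¬ Tendsto (fun z : ℂˣ => (z : ℂ) ^ k * c) unitsAtInfty (nhds L) := by
  intro h
  have := unitsAtInfty_neBot
  have h2 : Tendsto (fun z : ℂˣ => ‖(z : ℂ) ^ k * c‖) unitsAtInfty atTop := by
    have : (fun z : ℂˣ => ‖(z : ℂ) ^ k * c‖)
        = (fun r : ℝ => r ^ k * ‖c‖) ∘ fun z : ℂˣ => ‖(z : ℂ)‖ := by
      funext z; simp [norm_zpow, norm_mul]
    rw [this]
    exact (((tendsto_zpow_atTop_atTop hk)).atTop_mul_const (norm_pos_iff.mpr hc)).comp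
      tendsto_norm_unitsAtInfty
  exact not_tendsto_nhds_of_tendsto_atTop h2 ‖L‖ (h.norm)

/-- Identification of the bounded locus of a conormal component under the induced
cotangent `ℂˣ`-action: every point of `L^α` is `m`-bounded iff `m i ≤ 0` for `i` with
`α i = true` and `0 ≤ m i` for `i` with `α i = false`, iff the functional
`y ↦ ∑ i, m i * y i` is bounded above on the closed orthant `O_α`. -/
theorem bounded_locus_conormal_component {n : ℕ} (m : Fin n → ℤ) (α : Fin n → Bool) :
    ((∀ p ∈ conormalComponent α, IsMBounded m p) ↔
      ∀ i, (α i = true → m i ≤ 0) ∧ (α i = false → 0 ≤ m i)) ∧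
    ((∀ i, (α i = true → m i ≤ 0) ∧ (α i = false → 0 ≤ m i)) ↔
      BddAbove ((fun y : EuclideanSpace ℝ (Fin n) => ∑ i, (m i : ℝ) * y i) ''
        orthant α)) := by
  constructor
  · constructor
    · -- (a) → (b)
      intro H i
      constructor
      · intro hα
        by_contra hm
        push_neg at hm
        -- point with x = e_i, ξ = 0
        have hp : ((fun j => if j = i then (1:ℂ) else 0, fun _ => (0:ℂ)) :
            (Fin n → ℂ) × (Fin n → ℂ)) ∈ conormalComponent α := by
          constructor
          · intro j hj
            simp only
            rw [if_neg]
            rintro rfl; rw [hα] at hj; exact absurd hj (by simp)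
          · intro j _; rfl
        obtain ⟨L, hL⟩ := H _ hp
        have hLi : Tendsto (fun z : ℂˣ => (z : ℂ) ^ (m i) * 1) unitsAtInfty (nhds (L.1 i)) := by
          have := ((continuous_apply i).comp continuous_fst).continuousAt.tendsto.comp hL
          simpa [cotangentAction, Function.comp_def] using this
        exact not_tendsto_zpow hm one_ne_zero _ hLi
      · intro hα
        by_contra hm
        push_neg at hm
        have hp : ((fun _ => (0:ℂ), fun j => if j = i then (1:ℂ) else 0) :
            (Fin n → ℂ) × (Fin n → ℂ)) ∈ conormalComponent α := by
          constructor
          · intro j _; rfl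
          · intro j hj
            simp only
            rw [if_neg]
            rintro rfl; rw [hα] at hj; exact absurd hj (by simp)
        obtain ⟨L, hL⟩ := H _ hp
        have hLi : Tendsto (fun z : ℂˣ => (z : ℂ) ^ (-(m i)) * 1) unitsAtInfty
            (nhds (L.2 i)) := by
          have := ((continuous_apply i).comp continuous_snd).continuousAt.tendsto.comp hL
          simpa [cotangentAction, Function.comp_def] using this
        exact not_tendsto_zpow (by omega) one_ne_zero _ hLi
    · -- (b) → (a)
      intro H p hp
      refine ⟨(fun i => if m i = 0 then p.1 i else 0, fun i => if m i = 0 then p.2 i else 0), ?_⟩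
      rw [nhds_prod_eq]
      refine Tendsto.prodMk ?_ ?_ <;> rw [tendsto_pi_nhds] <;> intro i
      · by_cases hb : α i = true
        · rcases lt_or_eq_of_le ((H i).1 hb) with h | h
          · simp only [h.ne, if_neg, if_false]
            simpa using (tendsto_zpow_unitsAtInfty h).mul_const (p.1 i)
          · simp [h, zpow_zero]
            exact tendsto_const_nhds
        · have := hp.1 i (by simpa using hb)
          simp only [this, mul_zero]
          have h0 : (if m i = 0 then (0:ℂ) else 0) = 0 := by simp
          rw [h0]; exact tendsto_const_nhds
      · by_cases hb : α i = true
        · have := hp.2 i hb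
          simp only [this, mul_zero]
          have h0 : (if m i = 0 then (0:ℂ) else 0) = 0 := by simp
          rw [h0]; exact tendsto_const_nhds
        · rcases lt_or_eq_of_le (neg_nonpos_of_nonneg ((H i).2 (by simpa using hb))) with h | h
          · have hne : m i ≠ 0 := by omega
            simp only [hne, if_neg, if_false]
            simpa using (tendsto_zpow_unitsAtInfty h).mul_const (p.2 i)
          · have h0 : m i = 0 := by omega
            simp [h0, zpow_zero]
            exact tendsto_const_nhds
  · constructor
    · -- (b) → (c)
      intro H
      refine ⟨0, ?_⟩
      rintro v ⟨y, hy, rfl⟩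
      apply Finset.sum_nonpos
      intro i _
      rcases Bool.eq_false_or_eq_true (α i) with h | h
      · exact mul_nonpos_iff.mpr (Or.inr ⟨by exact_mod_cast (H i).1 h, (hy i).1 h⟩)
      · exact mul_nonpos_iff.mpr (Or.inl ⟨by exact_mod_cast (H i).2 h, (hy i).2 h⟩)
    · -- (c) → (b)
      intro H
      by_contra hc
      rw [not_forall] at hc
      obtain ⟨i, hi⟩ := hc
      have hi' : (α i = true ∧ 0 < m i) ∨ (α i = false ∧ m i < 0) := by
        by_cases hb : α i = true
        · refine Or.inl ⟨hb, ?_⟩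
          by_contra hm
          exact hi ⟨fun _ => not_lt.mp hm, fun hf => absurd hb (by simp [hf])⟩
        · refine Or.inr ⟨by simpa using hb, ?_⟩
          by_contra hm
          exact hi ⟨fun ht => absurd ht hb, fun _ => not_lt.mp hm⟩
      have hmi : (m i : ℝ) ≠ 0 := by
        rcases hi' with ⟨_, h2⟩ | ⟨_, h2⟩ <;> exact_mod_cast (by omega : m i ≠ 0)
      rw [bddAbove_def] at H
      obtain ⟨b, hb⟩ := H
      have hsign : (0:ℝ) < max b 0 + 1 := by positivity
      set t : ℝ := (max b 0 + 1) / (m i) with ht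
      have hyO : (WithLp.toLp 2 (fun j => if j = i then t else 0) : EuclideanSpace ℝ (Fin n)) ∈ orthant α := by
        intro j
        constructor <;> intro hj <;> by_cases hji : j = i
        · subst hji
          rcases hi' with ⟨h1, h2⟩ | ⟨h1, h2⟩
          · simp only [PiLp.toLp_apply, if_pos rfl]
            exact le_of_lt (div_pos hsign (by exact_mod_cast h2))
          · rw [h1] at hj; exact absurd hj (by simp)
        · simp [hji]
        · subst hji
          rcases hi' with ⟨h1, h2⟩ | ⟨h1, h2⟩
          · rw [h1] at hj; exact absurd hj (by simp)
          · simp only [PiLp.toLp_apply, if_pos rfl]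
            exact le_of_lt (div_neg_of_pos_of_neg hsign (by exact_mod_cast h2))
        · simp [hji]
      have hle : (∑ j, (m j : ℝ) *
          ((WithLp.toLp 2 (fun j => if j = i then t else 0) : EuclideanSpace ℝ (Fin n)) j)) ≤ b :=
        hb _ ⟨_, hyO, rfl⟩
      have hval : (∑ j, (m j : ℝ) *
          ((WithLp.toLp 2 (fun j => if j = i then t else 0) : EuclideanSpace ℝ (Fin n)) j)) = max b 0 + 1 := by
        rw [Finset.sum_eq_single i]
        · simp [ht, mul_div_cancel₀ _ hmi]
        · intro j _ hji; simp [hji]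
        · intro h; exact absurd (Finset.mem_univ i) h
      rw [hval] at hle
      linarith [le_max_left b 0]
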